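/- Let G be a locally finite connected graph with growth function β based at a vertex g_0. Define β'(0) = β(0), β'(n) = β(n) − β(n−1) for n ≥ 1, and β''(0) = β'(0), β''(n) = β'(n) − β'(n−1) for n ≥ 1. If β'' is non-negative and non-decreasing, then G has the {f_n}-containment property with f_n = 3·β''(2n). -/

import Mathlib

open SimpleGraph

namespace Firefighter

variable {V : Type*}

/-- The set of vertices on fire at time `n`, starting from initial fire `X0`, with fire spreading
along paths of length at most `r` avoiding the protected sets `W 1, ..., W n`. -/
def fireSet (G : SimpleGraph V) (r : ℕ) (X0 : Set V) (W : ℕ → Set V) : ℕ → Set V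
  | 0 => X0
  | n + 1 => {v | ∃ u ∈ fireSet G r X0 W n, ∃ p : G.Walk u v, p.length ≤ r ∧
      ∀ w ∈ p.support, ∀ i, 1 ≤ i → i ≤ n + 1 → w ∉ W i}

/-- `W` is an `(f, r)`-containment strategy for the initial fire `X0` in `G`. -/
def IsContainmentStrategy (G : SimpleGraph V) (r : ℕ) (f : ℕ → ℕ)
    (X0 : Set V) (W : ℕ → Set V) : Prop :=
  (∀ n, 1 ≤ n → (W n).Finite ∧ (W n).ncard ≤ f n) ∧
  (∀ n, Disjoint (fireSet G r X0 W n) (W (n + 1))) ∧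
  (∃ N, 0 < N ∧ ∀ n, N ≤ n → fireSet G r X0 W n = fireSet G r X0 W N)

/-- `G` has the `(f, r)`-containment property. -/
def HasContainmentProperty (G : SimpleGraph V) (r : ℕ) (f : ℕ → ℕ) : Prop :=
  ∀ X0 : Set V, X0.Finite → ∃ W : ℕ → Set V, IsContainmentStrategy G r f X0 W

/-- A graph is locally finite if every vertex has finitely many neighbors. -/
def LocallyFiniteGraph (G : SimpleGraph V) : Prop := ∀ v, (G.neighborSet v).Finite

/-- The ball of radius `n` about the vertex `g0` (in the combinatorial metric). -/
def ball (G : SimpleGraph V) (g0 : V) (n : ℕ) : Set V :=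
  {v | G.Reachable g0 v ∧ G.dist g0 v ≤ n}

/-- The sphere of radius `n` about the vertex `g0` (in the combinatorial metric). -/
def sphere (G : SimpleGraph V) (g0 : V) (n : ℕ) : Set V :=
  {v | G.Reachable g0 v ∧ G.dist g0 v = n}

/-- For `T` a subset of the sphere of radius `n`, `nextAdj G g0 n T` is the set `T*` of vertices
of the sphere of radius `n+1` adjacent to at least one vertex of `T`. -/
def nextAdj (G : SimpleGraph V) (g0 : V) (n : ℕ) (T : Set V) : Set V :=
  {v ∈ sphere G g0 (n + 1) | ∃ u ∈ T, G.Adj u v}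

/-- A graph has bounded degree if there is a uniform finite bound on vertex degrees. -/
def BoundedDegree (G : SimpleGraph V) : Prop :=
  ∃ D : ℕ, ∀ v, (G.neighborSet v).Finite ∧ (G.neighborSet v).ncard ≤ D

/-- Two graphs are quasi-isometric. -/
def QuasiIsometric {V' : Type*} (G : SimpleGraph V) (H : SimpleGraph V') : Prop :=
  ∃ c : ℕ, 1 ≤ c ∧ ∃ (φ : V → V') (ψ : V' → V),
    (∀ g1 g2, H.dist (φ g1) (φ g2) ≤ c * G.dist g1 g2 + c) ∧
    (∀ h1 h2, G.dist (ψ h1) (ψ h2) ≤ c * H.dist h1 h2 + c) ∧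
    (∀ g, G.dist g (ψ (φ g)) ≤ c) ∧
    (∀ h, H.dist h (φ (ψ h)) ≤ c)

/-- `f ≼ g` : there is `c > 0` with `f n ≤ c * g (c*n + c) + c` for all `n ≥ c`. -/
def Preceq (f g : ℕ → ℕ) : Prop :=
  ∃ c : ℕ, 0 < c ∧ ∀ n, c ≤ n → f n ≤ c * g (c * n + c) + c

/-- `f` and `g` have equivalent asymptotic growth. -/
def AsympEquiv (f g : ℕ → ℕ) : Prop := Preceq f g ∧ Preceq g f

/-- The ball of radius `n` about a set `X` of vertices. -/
def ballSet (G : SimpleGraph V) (X : Set V) (n : ℕ) : Set V :=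
  {v | ∃ u ∈ X, ∃ p : G.Walk u v, p.length ≤ n}

lemma ball_mono (G : SimpleGraph V) (g0 : V) {m n : ℕ} (h : m ≤ n) :
    ball G g0 m ⊆ ball G g0 n := fun v hv => ⟨hv.1, hv.2.trans h⟩

lemma ball_zero (G : SimpleGraph V) (g0 : V) : ball G g0 0 = {g0} := by
  ext v
  simp only [ball, Set.mem_setOf_eq, Set.mem_singleton_iff, Nat.le_zero]
  constructor
  · rintro ⟨hr, hd⟩
    exact (hr.dist_eq_zero_iff.mp hd).symm
  · rintro rfl
    exact ⟨Reachable.refl _, by simp⟩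

lemma ball_finite (G : SimpleGraph V) (hlf : ∀ v, (G.neighborSet v).Finite) (g0 : V) :
    ∀ n, (ball G g0 n).Finite := by
  intro n
  induction n with
  | zero => rw [ball_zero]; exact Set.finite_singleton _
  | succ n ih =>
    have hsub : ball G g0 (n+1) ⊆ ball G g0 n ∪ ⋃ u ∈ ball G g0 n, G.neighborSet u := by
      intro v hv
      by_cases h : G.dist g0 v ≤ n
      · exact Or.inl ⟨hv.1, h⟩
      · have hle := hv.2
        have hd : G.dist g0 v = n + 1 := by omega
        have hne : v ≠ g0 := by
          rintro rfl
          rw [SimpleGraph.dist_self] at hd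
          omega
        obtain ⟨p, hp⟩ := hv.1.exists_walk_length_eq_dist
        obtain ⟨w, hadj, q, hq⟩ := Walk.exists_eq_cons_of_ne hne p.reverse
        have hql : q.length = n := by
          have := congrArg Walk.length hq
          simp [Walk.length_cons] at this
          rw [hp, hd] at this
          omega
        have hw : w ∈ ball G g0 n := by
          refine ⟨(hadj.symm.reachable.trans hv.1.symm).symm, ?_⟩
          calc G.dist g0 w ≤ q.reverse.length := dist_le q.reverse
            _ = n := by rw [Walk.length_reverse, hql]
        right
        exact Set.mem_biUnion hw hadj.symm
    exact (ih.union (ih.biUnion (fun u _ => hlf u))).subset hsub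

lemma sphere_subset_ball (G : SimpleGraph V) (g0 : V) (n : ℕ) :
    sphere G g0 n ⊆ ball G g0 n := fun v hv => ⟨hv.1, hv.2.le⟩

lemma sphere_succ_eq (G : SimpleGraph V) (g0 : V) (n : ℕ) :
    sphere G g0 (n+1) = ball G g0 (n+1) \ ball G g0 n := by
  ext v
  simp only [sphere, ball, Set.mem_setOf_eq, Set.mem_diff]
  constructor
  · rintro ⟨hr, hd⟩
    exact ⟨⟨hr, hd.le⟩, fun h => by omega⟩
  · rintro ⟨⟨hr, h1⟩, h2⟩
    refine ⟨hr, ?_⟩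
    have : ¬ G.dist g0 v ≤ n := fun h => h2 ⟨hr, h⟩
    omega

lemma chunk {α : Type*} (c : ℕ → ℕ) :
    ∀ (d : ℕ) (S : Set α), S.Finite → S.ncard ≤ ∑ n ∈ Finset.Icc 1 d, c n →
    ∃ W : ℕ → Set α, (∀ n, W n ⊆ S) ∧ (∀ n, (W n).ncard ≤ c n) ∧
      (∀ n, d < n → W n = ∅) ∧ S ⊆ ⋃ n ∈ Finset.Icc 1 d, W n := by
  intro d
  induction d with
  | zero =>
    intro S hS hcard
    have : S = ∅ := by
      simp at hcard
      exact (Set.ncard_eq_zero hS).mp hcard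
    subst this
    exact ⟨fun _ => ∅, fun _ => le_refl _, fun _ => by simp, fun _ _ => rfl, by simp⟩
  | succ d ih =>
    intro S hS hcard
    obtain ⟨T, hTS, hTcard⟩ := Set.exists_subset_card_eq
      (min_le_right (c (d+1)) S.ncard)
    have hsplit : S.ncard ≤ ∑ n ∈ Finset.Icc 1 d, c n + c (d+1) := by
      rwa [← Finset.sum_Icc_succ_top (by omega : 1 ≤ d + 1)]
    have hdiff : (S \ T).ncard ≤ ∑ n ∈ Finset.Icc 1 d, c n := by
      rw [Set.ncard_diff hTS (hS.subset hTS), hTcard]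
      rcases le_total (c (d+1)) S.ncard with h | h
      · rw [min_eq_left h]; omega
      · rw [min_eq_right h]; omega
    obtain ⟨W', hW'S, hW'c, hW'z, hW'cov⟩ := ih (S \ T) hS.diff hdiff
    classical
    refine ⟨fun n => if n = d + 1 then T else W' n, ?_, ?_, ?_, ?_⟩
    · intro n
      by_cases h : n = d + 1
      · simpa [h] using hTS
      · simpa [h] using (hW'S n).trans Set.diff_subset
    · intro n
      by_cases h : n = d + 1
      · subst h
        simpa [hTcard] using min_le_left (c (d+1)) S.ncard
      · simpa [h] using hW'c n
    · intro n hn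
      have h1 : n ≠ d + 1 := by omega
      simp only [h1, if_neg h1]
      exact hW'z n (by omega)
    · intro v hv
      by_cases h : v ∈ T
      · exact Set.mem_biUnion (show d + 1 ∈ Finset.Icc 1 (d+1) by simp) (by simp [h])
      · obtain ⟨n, hn, hvn⟩ := Set.mem_iUnion₂.mp (hW'cov ⟨hv, h⟩)
        simp only [Finset.mem_Icc] at hn
        have hne : n ≠ d + 1 := by omega
        refine Set.mem_biUnion (show n ∈ Finset.Icc 1 (d+1) by simp; omega) ?_
        simp [hne, hvn]

lemma walk_length_le_one {G : SimpleGraph V} {u v : V} (p : G.Walk u v) (h : p.length ≤ 1) :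
    u = v ∨ G.Adj u v := by
  cases p with
  | nil => exact Or.inl rfl
  | cons h' q =>
    cases q with
    | nil => exact Or.inr h'
    | cons h'' q' => simp [Walk.length_cons] at h



theorem stmt14 {V : Type*} (G : SimpleGraph V) (hconn : G.Connected)
    (hlf : LocallyFiniteGraph G) (g0 : V) (betaP betaPP : ℕ → ℤ)
    (hbetaP0 : betaP 0 = ((ball G g0 0).ncard : ℤ))
    (hbetaP : ∀ n : ℕ, betaP (n + 1) =
      ((ball G g0 (n + 1)).ncard : ℤ) - ((ball G g0 n).ncard : ℤ))
    (hbetaPP0 : betaPP 0 = betaP 0)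
    (hbetaPP : ∀ n : ℕ, betaPP (n + 1) = betaP (n + 1) - betaP n)
    (hnonneg : ∀ n, 0 ≤ betaPP n) (hmono : Monotone betaPP) :
    HasContainmentProperty G 1 (fun n => (3 * betaPP (2 * n)).toNat) := by
  intro X0 hX0
  classical
  set d : ℕ := hX0.toFinset.sup (fun v => G.dist g0 v) + 1 with hd_def
  have hd1 : 1 ≤ d := Nat.le_add_left 1 _
  have hX0d : X0 ⊆ ball G g0 d := by
    intro v hv
    refine ⟨hconn.preconnected g0 v, ?_⟩
    have : G.dist g0 v ≤ hX0.toFinset.sup (fun v => G.dist g0 v) :=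
      Finset.le_sup (hX0.mem_toFinset.mpr hv)
    omega
  have hPsum : ∀ m, betaP m = ∑ j ∈ Finset.range (m+1), betaPP j := by
    intro m
    induction m with
    | zero => simp [hbetaPP0]
    | succ m ih =>
      rw [Finset.sum_range_succ, ← ih, hbetaPP]
      ring
  have hkey : ∀ e : ℕ, (∑ j ∈ Finset.range (2*e+1), betaPP j)
      + (∑ n ∈ Finset.Icc 1 e, betaPP (2*n))
      ≤ (∑ n ∈ Finset.Icc 1 e, 3 * betaPP (2*n)) + betaPP 0 := by
    intro e
    induction e with
    | zero => simp
    | succ e ih =>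
      have h1 : betaPP (2*e+1) ≤ betaPP (2*e+1+1) := hmono (by omega)
      have e1 : 2*(e+1)+1 = (2*e+1)+1+1 := by ring
      have e2 : 2*(e+1) = 2*e+1+1 := by ring
      rw [e1, Finset.sum_range_succ, Finset.sum_range_succ,
        Finset.sum_Icc_succ_top (by omega : 1 ≤ e+1),
        Finset.sum_Icc_succ_top (by omega : 1 ≤ e+1), e2]
      linarith [ih]
  set S : Set V := sphere G g0 (2*d) with hS_def
  have hSfin : S.Finite := (ball_finite G hlf g0 (2*d)).subset (sphere_subset_ball G g0 (2*d))
  have hmle : (ball G g0 (2*d-1)).ncard ≤ (ball G g0 ((2*d-1)+1)).ncard :=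
    Set.ncard_le_ncard (ball_mono G g0 (Nat.le_succ _)) (ball_finite G hlf g0 _)
  have h2d : 2*d = (2*d-1)+1 := by omega
  have hScard_int : (S.ncard : ℤ) = betaP (2*d) := by
    rw [hS_def, h2d, sphere_succ_eq, hbetaP,
      Set.ncard_diff (ball_mono G g0 (Nat.le_succ _)) (ball_finite G hlf g0 _)]
    exact Nat.cast_sub hmle
  have hcard : S.ncard ≤ ∑ n ∈ Finset.Icc 1 d, (3 * betaPP (2*n)).toNat := by
    have hM : betaPP 0 ≤ ∑ n ∈ Finset.Icc 1 d, betaPP (2*n) := by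
      have h0 : betaPP 0 ≤ betaPP (2*1) := hmono (by omega)
      exact h0.trans (Finset.single_le_sum (fun i _ => hnonneg _) (by simp [hd1]))
    have hInt : (S.ncard : ℤ) ≤ ∑ n ∈ Finset.Icc 1 d, ((3 * betaPP (2*n)).toNat : ℤ) := by
      have hL : ∑ n ∈ Finset.Icc 1 d, ((3 * betaPP (2*n)).toNat : ℤ)
          = ∑ n ∈ Finset.Icc 1 d, 3 * betaPP (2*n) :=
        Finset.sum_congr rfl (fun n _ =>
          Int.toNat_of_nonneg (by linarith [hnonneg (2*n)]))
      rw [hScard_int, hPsum, hL]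
      linarith [hkey d]
    exact_mod_cast hInt
  obtain ⟨W, hWS, hWc, hWz, hWcov⟩ := chunk (fun n => (3 * betaPP (2*n)).toNat) d S hSfin hcard
  have hinv : ∀ n, fireSet G 1 X0 W n ⊆ ball G g0 (min (d+n) (2*d-1)) := by
    intro n
    induction n with
    | zero =>
      have hmin : min (d+0) (2*d-1) = d := by omega
      rw [hmin]
      exact hX0d
    | succ n ih =>
      intro v hv
      obtain ⟨u, hu, p, hp1, hp2⟩ := hv
      rcases walk_length_le_one p hp1 with rfl | hadj
      · exact ball_mono G g0 (by omega) (ih hu)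
      · have hub := ih hu
        have hdv : G.dist g0 v ≤ min (d+n) (2*d-1) + 1 := by
          calc G.dist g0 v ≤ G.dist g0 u + G.dist u v := hconn.dist_triangle
            _ ≤ min (d+n) (2*d-1) + 1 := add_le_add hub.2 (dist_le hadj.toWalk)
        have hreach : G.Reachable g0 v := hconn.preconnected g0 v
        refine ⟨hreach, ?_⟩
        by_cases hc : d + n + 1 ≤ 2*d - 1
        · omega
        · have hnd : d ≤ n + 1 := by omega
          have hne2d : G.dist g0 v ≠ 2*d := by
            intro h2
            have hvS : v ∈ S := ⟨hreach, h2⟩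
            obtain ⟨i, hi, hvi⟩ := Set.mem_iUnion₂.mp (hWcov hvS)
            simp only [Finset.mem_Icc] at hi
            exact hp2 v (Walk.end_mem_support p) i hi.1 (by omega) hvi
          omega
  have hXball : ∀ n, fireSet G 1 X0 W n ⊆ ball G g0 (2*d-1) :=
    fun n => (hinv n).trans (ball_mono G g0 (min_le_right _ _))
  have hXnotS : ∀ n v, v ∈ fireSet G 1 X0 W n → v ∉ S := by
    intro n v hv hvS
    have h1 := (hXball n hv).2
    have h2 := hvS.2
    omega
  have hmonoX : ∀ n, fireSet G 1 X0 W n ⊆ fireSet G 1 X0 W (n+1) := by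
    intro n v hv
    refine ⟨v, hv, Walk.nil, by simp, ?_⟩
    intro w hw i hi1 hi2 hwi
    simp only [Walk.support_nil, List.mem_singleton] at hw
    subst hw
    exact hXnotS n _ hv (hWS i hwi)
  have hF : ∀ m, d ≤ m + 1 → fireSet G 1 X0 W (m+1) =
      {v | ∃ u ∈ fireSet G 1 X0 W m, ∃ p : G.Walk u v, p.length ≤ 1 ∧
        ∀ w ∈ p.support, ∀ i, 1 ≤ i → i ≤ d → w ∉ W i} := by
    intro m hm
    ext v
    constructor
    · rintro ⟨u, hu, p, hp1, hp2⟩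
      exact ⟨u, hu, p, hp1, fun w hw i h1 h2 => hp2 w hw i h1 (h2.trans hm)⟩
    · rintro ⟨u, hu, p, hp1, hp2⟩
      refine ⟨u, hu, p, hp1, fun w hw i h1 h2 => ?_⟩
      by_cases hid : i ≤ d
      · exact hp2 w hw i h1 hid
      · simp [hWz i (by omega)]
  have hgle : ∀ n, (fireSet G 1 X0 W n).ncard ≤ (ball G g0 (2*d-1)).ncard :=
    fun n => Set.ncard_le_ncard (hXball n) (ball_finite G hlf g0 _)
  have hexN : ∃ N, d ≤ N ∧ fireSet G 1 X0 W (N+1) = fireSet G 1 X0 W N := by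
    by_contra hcon
    push_neg at hcon
    have hlt : ∀ N, d ≤ N →
        (fireSet G 1 X0 W N).ncard < (fireSet G 1 X0 W (N+1)).ncard := by
      intro N hN
      exact Set.ncard_lt_ncard ((hmonoX N).ssubset_of_ne (fun h => hcon N hN h.symm))
        ((ball_finite G hlf g0 _).subset (hXball (N+1)))
    have hgrow : ∀ k, k ≤ (fireSet G 1 X0 W (d+k)).ncard := by
      intro k
      induction k with
      | zero => omega
      | succ k ih =>
        have h1 := hlt (d+k) (by omega)
        have heq : d + (k+1) = (d+k)+1 := rfl
        rw [heq]
        omega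
    have h1 := hgrow ((ball G g0 (2*d-1)).ncard + 1)
    have h2 := hgle (d + ((ball G g0 (2*d-1)).ncard + 1))
    omega
  obtain ⟨N, hNd, hNfix⟩ := hexN
  have hstab : ∀ k, fireSet G 1 X0 W (N + k) = fireSet G 1 X0 W N := by
    intro k
    induction k with
    | zero => rfl
    | succ k ih =>
      have h1 : N + (k+1) = (N+k)+1 := rfl
      rw [h1, hF (N+k) (by omega), ih, ← hF N (by omega), hNfix]
  refine ⟨W, ⟨?_, ?_, ?_⟩⟩
  · intro n hn
    exact ⟨hSfin.subset (hWS n), hWc n⟩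
  · intro n
    rw [Set.disjoint_left]
    intro v hv hvW
    exact hXnotS n v hv (hWS (n+1) hvW)
  · refine ⟨N, by omega, ?_⟩
    intro n hn
    have h1 : n = N + (n - N) := by omega
    rw [h1, hstab]

end Firefighter
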